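/- Let n ≥ 2, let x_1 ≤ ⋯ ≤ x_n be real numbers with Σ_{i=1}^{n} x_i = 0, and set σ_μ² := (1/n) Σ_{i=1}^{n} x_i². Let z_1 ≤ ⋯ ≤ z_{n−1} be real numbers with Φ(z_i) = i/n for i = 1, …, n−1, and set l := Σ_{i=1}^{n−1} (x_{i+1} − x_i) φ(z_i). Then for every real σ: ∫_{−∞}^{z_1} (x_1 − σ z)² φ(z) dz + Σ_{i=2}^{n−1} ∫_{z_{i−1}}^{z_i} (x_i − σ z)² φ(z) dz + ∫_{z_{n−1}}^{∞} (x_n − σ z)² φ(z) dz = σ_μ² − 2 σ l + σ². -/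

import Mathlib

open MeasureTheory

/-- The standard normal density `φ(z) = (2π)^{-1/2} exp(-z²/2)`. -/
noncomputable def stdGaussianPDF (z : ℝ) : ℝ :=
  (Real.sqrt (2 * Real.pi))⁻¹ * Real.exp (-z ^ 2 / 2)

/-- The standard normal cumulative distribution function `Φ(t) = ∫_{-∞}^t φ(z) dz`. -/
noncomputable def stdGaussianCDF (t : ℝ) : ℝ :=
  ∫ z in Set.Iic t, stdGaussianPDF z

open Real Filter Set Asymptotics

lemma pdf_eq (t : ℝ) : stdGaussianPDF t = (Real.sqrt (2 * Real.pi))⁻¹ * Real.exp (-(1/2) * t ^ 2) := by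
  unfold stdGaussianPDF; ring_nf

lemma cont_pdf : Continuous stdGaussianPDF := by
  unfold stdGaussianPDF
  fun_prop

lemma integrable_pdf : Integrable stdGaussianPDF := by
  have := (integrable_exp_neg_mul_sq (one_half_pos)).const_mul (Real.sqrt (2 * Real.pi))⁻¹
  refine this.congr ?_
  filter_upwards with t
  rw [pdf_eq]

lemma integrable_t_pdf : Integrable (fun t => t * stdGaussianPDF t) := by
  have := (integrable_mul_exp_neg_mul_sq (one_half_pos)).const_mul (Real.sqrt (2 * Real.pi))⁻¹
  refine this.congr ?_
  filter_upwards with t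
  rw [pdf_eq]; ring

lemma integrable_t2_pdf : Integrable (fun t => t ^ 2 * stdGaussianPDF t) := by
  have h := (integrable_rpow_mul_exp_neg_mul_sq (one_half_pos) (by norm_num : (-1:ℝ) < 2)).const_mul (Real.sqrt (2 * Real.pi))⁻¹
  refine h.congr ?_
  filter_upwards with t
  rw [pdf_eq, ← Real.rpow_natCast t 2]
  push_cast
  ring

lemma integrable_sq_pdf (X σ : ℝ) : Integrable (fun t => (X - σ * t) ^ 2 * stdGaussianPDF t) := by
  have h : (fun t => (X - σ * t) ^ 2 * stdGaussianPDF t)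
      = fun t => X ^ 2 * stdGaussianPDF t + ((-(2*σ*X)) * (t * stdGaussianPDF t) + σ ^ 2 * (t ^ 2 * stdGaussianPDF t)) := by
    funext t; ring
  rw [h]
  exact (integrable_pdf.const_mul _).add ((integrable_t_pdf.const_mul _).add (integrable_t2_pdf.const_mul _))

lemma hasDerivAt_pdf (t : ℝ) : HasDerivAt stdGaussianPDF (-t * stdGaussianPDF t) t := by
  have h1 : HasDerivAt (fun s : ℝ => -s ^ 2 / 2) (-t) t := by
    have := ((hasDerivAt_pow 2 t).neg).div_const 2
    simpa using this.congr_deriv (by push_cast; ring)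
  have h2 := (h1.exp).const_mul (Real.sqrt (2 * Real.pi))⁻¹
  refine h2.congr_deriv ?_
  unfold stdGaussianPDF; ring

lemma hasDerivAt_neg_pdf (t : ℝ) : HasDerivAt (fun s => -stdGaussianPDF s) (t * stdGaussianPDF t) t := by
  exact ((hasDerivAt_pdf t).neg).congr_deriv (by ring)

lemma hasDerivAt_neg_t_pdf (t : ℝ) :
    HasDerivAt (fun s => -(s * stdGaussianPDF s)) ((t ^ 2 - 1) * stdGaussianPDF t) t := by
  have := ((hasDerivAt_id t).mul (hasDerivAt_pdf t)).neg
  refine this.congr_deriv ?_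
  simp only [id_eq]
  ring

lemma tendsto_pdf_atTop : Tendsto stdGaussianPDF atTop (nhds 0) := by
  unfold stdGaussianPDF
  have h2 : Tendsto (fun t : ℝ => -t ^ 2 / 2) atTop atBot := by
    apply Tendsto.atBot_div_const (by norm_num : (0:ℝ) < 2)
    exact tendsto_neg_atBot_iff.mpr (tendsto_pow_atTop two_ne_zero)
  simpa using (Real.tendsto_exp_atBot.comp h2).const_mul (Real.sqrt (2 * Real.pi))⁻¹

lemma tendsto_pdf_atBot : Tendsto stdGaussianPDF atBot (nhds 0) := by
  have h : stdGaussianPDF = fun t => stdGaussianPDF (-t) := by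
    funext t; unfold stdGaussianPDF; rw [neg_pow]; ring_nf
  rw [h]
  exact tendsto_pdf_atTop.comp tendsto_neg_atBot_atTop

lemma tendsto_t_pdf_atTop : Tendsto (fun t => t * stdGaussianPDF t) atTop (nhds 0) := by
  have h := rpow_mul_exp_neg_mul_sq_isLittleO_exp_neg (one_half_pos) 1
  have h2 : Tendsto (fun x : ℝ => Real.exp (-(1/2) * x)) atTop (nhds 0) := by
    apply Real.tendsto_exp_atBot.comp
    have : Tendsto (fun x : ℝ => -(1/2) * x) atTop atBot := by
      simp only [neg_mul]
      exact tendsto_neg_atBot_iff.mpr (tendsto_id.const_mul_atTop (by norm_num : (0:ℝ) < 1/2))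
    exact this
  have h3 := h.trans_tendsto h2
  have heq : (fun x : ℝ => x ^ (1:ℝ) * Real.exp (-(1/2) * x ^ 2)) =ᶠ[atTop]
      (fun t => t * stdGaussianPDF t / (Real.sqrt (2 * Real.pi))⁻¹) := by
    filter_upwards with x
    rw [Real.rpow_one]
    unfold stdGaussianPDF
    rw [mul_comm ((Real.sqrt (2 * Real.pi))⁻¹) _, show -x^2/2 = -(1/2)*x^2 by ring]
    field_simp
  have h4 := (h3.congr' heq)
  have h5 := h4.mul_const (Real.sqrt (2 * Real.pi))⁻¹
  simp only [zero_mul] at h5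
  refine h5.congr' ?_
  filter_upwards with x
  have hs : (Real.sqrt (2 * Real.pi))⁻¹ ≠ 0 := by positivity
  field_simp

lemma tendsto_t_pdf_atBot : Tendsto (fun t => t * stdGaussianPDF t) atBot (nhds 0) := by
  have h : (fun t => t * stdGaussianPDF t) = fun t => -((-t) * stdGaussianPDF (-t)) := by
    funext t; unfold stdGaussianPDF; rw [neg_pow]; ring_nf
  rw [h]
  simpa using (tendsto_t_pdf_atTop.comp tendsto_neg_atBot_atTop).neg

lemma integral_pdf : ∫ t, stdGaussianPDF t = 1 := by
  have h : (fun t : ℝ => stdGaussianPDF t) = fun t => (Real.sqrt (2 * Real.pi))⁻¹ * Real.exp (-(1/2) * t ^ 2) := by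
    funext t; unfold stdGaussianPDF; ring_nf
  rw [h, MeasureTheory.integral_const_mul, integral_gaussian]
  rw [show Real.pi / (1/2) = 2 * Real.pi by ring]
  rw [inv_mul_cancel₀ (by positivity)]


lemma Iic_t (c : ℝ) : ∫ t in Set.Iic c, t * stdGaussianPDF t = -stdGaussianPDF c := by
  have := integral_Iic_of_hasDerivAt_of_tendsto' (f := fun s => -stdGaussianPDF s)
    (f' := fun t => t * stdGaussianPDF t) (a := c) (m := 0)
    (fun x _ => hasDerivAt_neg_pdf x) integrable_t_pdf.integrableOn
    (by simpa using tendsto_pdf_atBot.neg)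
  simpa using this

lemma Iic_t2m (c : ℝ) : ∫ t in Set.Iic c, (t ^ 2 - 1) * stdGaussianPDF t = -(c * stdGaussianPDF c) := by
  have hint : Integrable (fun t => (t ^ 2 - 1) * stdGaussianPDF t) := by
    have h : (fun t => (t ^ 2 - 1) * stdGaussianPDF t)
        = fun t => t ^ 2 * stdGaussianPDF t + (-1) * stdGaussianPDF t := by funext t; ring
    rw [h]; exact integrable_t2_pdf.add (integrable_pdf.const_mul _)
  have := integral_Iic_of_hasDerivAt_of_tendsto' (f := fun s => -(s * stdGaussianPDF s))
    (f' := fun t => (t ^ 2 - 1) * stdGaussianPDF t) (a := c) (m := 0)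
    (fun x _ => hasDerivAt_neg_t_pdf x) hint.integrableOn
    (by simpa using tendsto_t_pdf_atBot.neg)
  simpa using this

lemma Ioi_pdf (c : ℝ) : ∫ t in Set.Ioi c, stdGaussianPDF t = 1 - stdGaussianCDF c := by
  have h := intervalIntegral.integral_Iic_add_Ioi (b := c) (f := stdGaussianPDF)
    integrable_pdf.integrableOn integrable_pdf.integrableOn
  rw [integral_pdf] at h
  unfold stdGaussianCDF
  linarith

lemma Ioi_t (c : ℝ) : ∫ t in Set.Ioi c, t * stdGaussianPDF t = stdGaussianPDF c := by
  have := integral_Ioi_of_hasDerivAt_of_tendsto' (f := fun s => -stdGaussianPDF s)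
    (f' := fun t => t * stdGaussianPDF t) (a := c) (m := 0)
    (fun x _ => hasDerivAt_neg_pdf x) integrable_t_pdf.integrableOn
    (by simpa using tendsto_pdf_atTop.neg)
  simpa using this

lemma Ioi_t2m (c : ℝ) : ∫ t in Set.Ioi c, (t ^ 2 - 1) * stdGaussianPDF t = c * stdGaussianPDF c := by
  have hint : Integrable (fun t => (t ^ 2 - 1) * stdGaussianPDF t) := by
    have h : (fun t => (t ^ 2 - 1) * stdGaussianPDF t)
        = fun t => t ^ 2 * stdGaussianPDF t + (-1) * stdGaussianPDF t := by funext t; ring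
    rw [h]; exact integrable_t2_pdf.add (integrable_pdf.const_mul _)
  have := integral_Ioi_of_hasDerivAt_of_tendsto' (f := fun s => -(s * stdGaussianPDF s))
    (f' := fun t => (t ^ 2 - 1) * stdGaussianPDF t) (a := c) (m := 0)
    (fun x _ => hasDerivAt_neg_t_pdf x) hint.integrableOn
    (by simpa using tendsto_t_pdf_atTop.neg)
  simpa using this

lemma ii_pdf (a b : ℝ) : ∫ t in a..b, stdGaussianPDF t = stdGaussianCDF b - stdGaussianCDF a := by
  rw [← intervalIntegral.integral_Iic_sub_Iic integrable_pdf.integrableOn integrable_pdf.integrableOn]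
  rfl

lemma ii_t (a b : ℝ) : ∫ t in a..b, t * stdGaussianPDF t = stdGaussianPDF a - stdGaussianPDF b := by
  have := intervalIntegral.integral_eq_sub_of_hasDerivAt (a := a) (b := b)
    (f := fun s => -stdGaussianPDF s) (f' := fun t => t * stdGaussianPDF t)
    (fun x _ => hasDerivAt_neg_pdf x)
    ((continuous_id.mul cont_pdf).intervalIntegrable a b)
  rw [this]; ring

lemma ii_t2m (a b : ℝ) : ∫ t in a..b, (t ^ 2 - 1) * stdGaussianPDF t
    = a * stdGaussianPDF a - b * stdGaussianPDF b := by
  have := intervalIntegral.integral_eq_sub_of_hasDerivAt (a := a) (b := b)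
    (f := fun s => -(s * stdGaussianPDF s)) (f' := fun t => (t ^ 2 - 1) * stdGaussianPDF t)
    (fun x _ => hasDerivAt_neg_t_pdf x)
    ((((continuous_pow 2).sub continuous_const).mul cont_pdf).intervalIntegrable a b)
  rw [this]; ring

lemma Iic_t2 (c : ℝ) : ∫ t in Set.Iic c, t ^ 2 * stdGaussianPDF t
    = stdGaussianCDF c - c * stdGaussianPDF c := by
  have h : ∀ t : ℝ, t ^ 2 * stdGaussianPDF t
      = (t ^ 2 - 1) * stdGaussianPDF t + stdGaussianPDF t := by intro t; ring
  simp_rw [h]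
  rw [MeasureTheory.integral_add ?h1 integrable_pdf.integrableOn, Iic_t2m c]
  · unfold stdGaussianCDF; ring
  · have : (fun t => (t ^ 2 - 1) * stdGaussianPDF t)
        = fun t => t ^ 2 * stdGaussianPDF t + (-1) * stdGaussianPDF t := by funext t; ring
    rw [this]
    exact (integrable_t2_pdf.add (integrable_pdf.const_mul _)).integrableOn

lemma Ioi_t2 (c : ℝ) : ∫ t in Set.Ioi c, t ^ 2 * stdGaussianPDF t
    = 1 - stdGaussianCDF c + c * stdGaussianPDF c := by
  have h : ∀ t : ℝ, t ^ 2 * stdGaussianPDF t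
      = (t ^ 2 - 1) * stdGaussianPDF t + stdGaussianPDF t := by intro t; ring
  simp_rw [h]
  rw [MeasureTheory.integral_add ?h1 integrable_pdf.integrableOn, Ioi_t2m c, Ioi_pdf c]
  · ring
  · have : (fun t => (t ^ 2 - 1) * stdGaussianPDF t)
        = fun t => t ^ 2 * stdGaussianPDF t + (-1) * stdGaussianPDF t := by funext t; ring
    rw [this]
    exact (integrable_t2_pdf.add (integrable_pdf.const_mul _)).integrableOn

lemma left_piece (X σ c : ℝ) : ∫ t in Set.Iic c, (X - σ * t) ^ 2 * stdGaussianPDF t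
    = X ^ 2 * stdGaussianCDF c + 2 * σ * X * stdGaussianPDF c
      + σ ^ 2 * (stdGaussianCDF c - c * stdGaussianPDF c) := by
  have h : ∀ t : ℝ, (X - σ * t) ^ 2 * stdGaussianPDF t
      = X ^ 2 * stdGaussianPDF t + ((-(2 * σ * X)) * (t * stdGaussianPDF t)
        + σ ^ 2 * (t ^ 2 * stdGaussianPDF t)) := by intro t; ring
  simp_rw [h]
  have h1 : IntegrableOn (fun t : ℝ => X ^ 2 * stdGaussianPDF t) (Set.Iic c) :=
    (integrable_pdf.const_mul _).integrableOn
  have h2 : IntegrableOn (fun t : ℝ => (-(2 * σ * X)) * (t * stdGaussianPDF t)) (Set.Iic c) :=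
    (integrable_t_pdf.const_mul _).integrableOn
  have h3 : IntegrableOn (fun t : ℝ => σ ^ 2 * (t ^ 2 * stdGaussianPDF t)) (Set.Iic c) :=
    (integrable_t2_pdf.const_mul _).integrableOn
  have h23 : IntegrableOn (fun t : ℝ => (-(2 * σ * X)) * (t * stdGaussianPDF t)
      + σ ^ 2 * (t ^ 2 * stdGaussianPDF t)) (Set.Iic c) := h2.add h3
  rw [MeasureTheory.integral_add h1 h23, MeasureTheory.integral_add h2 h3,
    MeasureTheory.integral_const_mul, MeasureTheory.integral_const_mul,
    MeasureTheory.integral_const_mul, Iic_t, Iic_t2]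
  show X ^ 2 * stdGaussianCDF c + _ = _
  ring

lemma right_piece (X σ c : ℝ) : ∫ t in Set.Ici c, (X - σ * t) ^ 2 * stdGaussianPDF t
    = X ^ 2 * (1 - stdGaussianCDF c) - 2 * σ * X * stdGaussianPDF c
      + σ ^ 2 * (1 - stdGaussianCDF c + c * stdGaussianPDF c) := by
  rw [MeasureTheory.integral_Ici_eq_integral_Ioi]
  have h : ∀ t : ℝ, (X - σ * t) ^ 2 * stdGaussianPDF t
      = X ^ 2 * stdGaussianPDF t + ((-(2 * σ * X)) * (t * stdGaussianPDF t)
        + σ ^ 2 * (t ^ 2 * stdGaussianPDF t)) := by intro t; ring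
  simp_rw [h]
  have h1 : IntegrableOn (fun t : ℝ => X ^ 2 * stdGaussianPDF t) (Set.Ioi c) :=
    (integrable_pdf.const_mul _).integrableOn
  have h2 : IntegrableOn (fun t : ℝ => (-(2 * σ * X)) * (t * stdGaussianPDF t)) (Set.Ioi c) :=
    (integrable_t_pdf.const_mul _).integrableOn
  have h3 : IntegrableOn (fun t : ℝ => σ ^ 2 * (t ^ 2 * stdGaussianPDF t)) (Set.Ioi c) :=
    (integrable_t2_pdf.const_mul _).integrableOn
  have h23 : IntegrableOn (fun t : ℝ => (-(2 * σ * X)) * (t * stdGaussianPDF t)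
      + σ ^ 2 * (t ^ 2 * stdGaussianPDF t)) (Set.Ioi c) := h2.add h3
  rw [MeasureTheory.integral_add h1 h23, MeasureTheory.integral_add h2 h3,
    MeasureTheory.integral_const_mul, MeasureTheory.integral_const_mul,
    MeasureTheory.integral_const_mul, Ioi_pdf, Ioi_t, Ioi_t2]
  ring

lemma mid_piece (X σ a b : ℝ) : ∫ t in a..b, (X - σ * t) ^ 2 * stdGaussianPDF t
    = X ^ 2 * (stdGaussianCDF b - stdGaussianCDF a)
      + 2 * σ * X * (stdGaussianPDF b - stdGaussianPDF a)
      + σ ^ 2 * (stdGaussianCDF b - stdGaussianCDF a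
          + a * stdGaussianPDF a - b * stdGaussianPDF b) := by
  have h : ∀ t : ℝ, (X - σ * t) ^ 2 * stdGaussianPDF t
      = X ^ 2 * stdGaussianPDF t + ((-(2 * σ * X)) * (t * stdGaussianPDF t)
        + σ ^ 2 * ((t ^ 2 - 1) * stdGaussianPDF t + stdGaussianPDF t)) := by intro t; ring
  simp_rw [h]
  have i1 : IntervalIntegrable stdGaussianPDF volume a b := cont_pdf.intervalIntegrable a b
  have i2 : IntervalIntegrable (fun t => t * stdGaussianPDF t) volume a b :=
    (continuous_id.mul cont_pdf).intervalIntegrable a b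
  have i3 : IntervalIntegrable (fun t => (t ^ 2 - 1) * stdGaussianPDF t) volume a b :=
    (((continuous_pow 2).sub continuous_const).mul cont_pdf).intervalIntegrable a b
  rw [intervalIntegral.integral_add ((i1.const_mul _))
      ((i2.const_mul _).add ((i3.add i1).const_mul _)),
    intervalIntegral.integral_add (i2.const_mul _) ((i3.add i1).const_mul _),
    intervalIntegral.integral_const_mul, intervalIntegral.integral_const_mul,
    intervalIntegral.integral_const_mul,
    intervalIntegral.integral_add i3 i1, ii_pdf, ii_t, ii_t2m]
  ring

lemma abel_sum (m : ℕ) (a b : ℕ → ℝ) :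
    a 0 * b 1 + (∑ i ∈ Finset.range m, a (i + 1) * (b (i + 2) - b (i + 1)))
      - a (m + 1) * b (m + 1)
      = -∑ i ∈ Finset.range (m + 1), (a (i + 1) - a i) * b (i + 1) := by
  induction m with
  | zero => simp; ring
  | succ k ih =>
    rw [Finset.sum_range_succ, Finset.sum_range_succ (n := k + 1)]
    have h : a 0 * b 1 + ∑ i ∈ Finset.range k, a (i + 1) * (b (i + 2) - b (i + 1))
        = a (k + 1) * b (k + 1) - ∑ i ∈ Finset.range (k + 1), (a (i + 1) - a i) * b (i + 1) := by
      linarith [ih]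
    linarith [h]

/-- For sorted reals `x 1 ≤ ⋯ ≤ x n` with zero sum,
`σ_μ² = (1/n) Σ (x i)²`, Gaussian quantiles `z 1 ≤ ⋯ ≤ z (n-1)` with `Φ (z i) = i/n`,
and projection length `l = Σ_{i=1}^{n-1} (x (i+1) - x i) φ(z i)`, the quadratic
transport cost to the centered Gaussian of standard deviation `σ` equals
`σ_μ² - 2 σ l + σ²` for every real `σ`. -/
theorem squared_transport_cost_to_gaussian
    (n : ℕ) (hn : 2 ≤ n) (x : ℕ → ℝ)
    (hxmono : ∀ i, 1 ≤ i → i < n → x i ≤ x (i + 1))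
    (hxsum : ∑ i ∈ Finset.Icc 1 n, x i = 0)
    (σμsq : ℝ) (hσμsq : σμsq = (1 / (n : ℝ)) * ∑ i ∈ Finset.Icc 1 n, (x i) ^ 2)
    (z : ℕ → ℝ)
    (hzmono : ∀ i, 1 ≤ i → i + 1 ≤ n - 1 → z i ≤ z (i + 1))
    (hz : ∀ i, 1 ≤ i → i ≤ n - 1 → stdGaussianCDF (z i) = (i : ℝ) / n)
    (l : ℝ) (hl : l = ∑ i ∈ Finset.Icc 1 (n - 1), (x (i + 1) - x i) * stdGaussianPDF (z i))
    (σ : ℝ) :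
    (∫ t in Set.Iic (z 1), (x 1 - σ * t) ^ 2 * stdGaussianPDF t)
      + (∑ i ∈ Finset.Icc 2 (n - 1),
          ∫ t in (z (i - 1))..(z i), (x i - σ * t) ^ 2 * stdGaussianPDF t)
      + (∫ t in Set.Ici (z (n - 1)), (x n - σ * t) ^ 2 * stdGaussianPDF t)
      = σμsq - 2 * σ * l + σ ^ 2 := by
  obtain ⟨m, rfl⟩ : ∃ m, n = m + 2 := ⟨n - 2, by omega⟩
  subst hσμsq hl
  have hm1 : m + 2 - 1 = m + 1 := rfl
  rw [hm1] at hz ⊢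
  set N : ℝ := ((m : ℝ) + 2) with hN
  have hNne : N ≠ 0 := by positivity
  have hzΦ : ∀ i, 1 ≤ i → i ≤ m + 1 → stdGaussianCDF (z i) = (i : ℝ) / N := by
    intro i h1 h2
    rw [hz i h1 h2]
    push_cast
    rfl
  -- abbreviations
  set A : ℕ → ℝ := fun i => x (i + 1) with hA
  set B : ℕ → ℝ := fun i => stdGaussianPDF (z i) with hB
  set C : ℕ → ℝ := fun i => z i * stdGaussianPDF (z i) with hC
  -- left piece
  have hleft : (∫ t in Set.Iic (z 1), (x 1 - σ * t) ^ 2 * stdGaussianPDF t)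
      = A 0 ^ 2 * (1 / N) + 2 * σ * A 0 * B 1 + σ ^ 2 * (1 / N - C 1) := by
    rw [left_piece, hzΦ 1 le_rfl (by omega)]
    simp only [hA, hB, hC, Nat.cast_one]
  -- right piece
  have hright : (∫ t in Set.Ici (z (m + 1)), (x (m + 2) - σ * t) ^ 2 * stdGaussianPDF t)
      = A (m + 1) ^ 2 * (1 / N) - 2 * σ * A (m + 1) * B (m + 1)
        + σ ^ 2 * (1 / N + C (m + 1)) := by
    rw [right_piece, hzΦ (m + 1) (by omega) le_rfl]
    simp only [hA, hB, hC]
    push_cast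
    have h1 : 1 - ((m : ℝ) + 1) / N = 1 / N := by field_simp [hN]; ring
    rw [h1]
  -- middle pieces
  have hmid : ∀ i ∈ Finset.Icc 2 (m + 1),
      (∫ t in (z (i - 1))..(z i), (x i - σ * t) ^ 2 * stdGaussianPDF t)
      = x i ^ 2 * (1 / N) + 2 * σ * x i * (B i - B (i - 1))
        + σ ^ 2 * (1 / N + C (i - 1) - C i) := by
    intro i hi
    rw [Finset.mem_Icc] at hi
    rw [mid_piece, hzΦ i (by omega) hi.2, hzΦ (i - 1) (by omega) (by omega)]
    simp only [hB, hC]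
    rw [Nat.cast_sub (by omega : 1 ≤ i)]
    push_cast
    have h1 : (i : ℝ) / N - ((i : ℝ) - 1) / N = 1 / N := by ring
    rw [show (i:ℝ)/N - ((i:ℝ)-1)/N + z (i-1) * stdGaussianPDF (z (i-1)) - z i * stdGaussianPDF (z i)
        = 1/N + z (i-1) * stdGaussianPDF (z (i-1)) - z i * stdGaussianPDF (z i) by rw [← h1]]
    rw [h1]
  rw [hleft, hright, Finset.sum_congr rfl hmid]
  -- reindex middle sum to range m
  have hmidsum : ∑ i ∈ Finset.Icc 2 (m + 1),
      (x i ^ 2 * (1 / N) + 2 * σ * x i * (B i - B (i - 1))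
        + σ ^ 2 * (1 / N + C (i - 1) - C i))
      = (∑ i ∈ Finset.range m, x (i + 2) ^ 2) * (1 / N)
        + 2 * σ * (∑ i ∈ Finset.range m, x (i + 2) * (B (i + 2) - B (i + 1)))
        + σ ^ 2 * ((m : ℝ) * (1 / N) + (C 1 - C (m + 1))) := by
    rw [← Finset.Ico_add_one_right_eq_Icc, Finset.sum_Ico_eq_sum_range,
      show m + 1 + 1 - 2 = m from by omega]
    rw [Finset.sum_congr rfl (g := fun i => x (i + 2) ^ 2 * (1 / N)
        + 2 * σ * (x (i + 2) * (B (i + 2) - B (i + 1)))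
        + σ ^ 2 * (1 / N + (C (i + 1) - C (i + 2))))
      (fun i _ => by
        rw [show 2 + i = i + 2 from by omega, show i + 2 - 1 = i + 1 from by omega]
        ring)]
    rw [Finset.sum_add_distrib, Finset.sum_add_distrib, ← Finset.sum_mul,
      ← Finset.mul_sum, ← Finset.mul_sum, Finset.sum_add_distrib,
      Finset.sum_const, Finset.card_range, nsmul_eq_mul,
      Finset.sum_range_sub' (f := fun i => C (i + 1))]
  rw [hmidsum]
  -- x-square sum
  have hsq : ∑ i ∈ Finset.Icc 1 (m + 2), x i ^ 2
      = x 1 ^ 2 + (∑ i ∈ Finset.range m, x (i + 2) ^ 2) + x (m + 2) ^ 2 := by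
    rw [← Finset.Ico_add_one_right_eq_Icc, Finset.sum_Ico_eq_sum_range,
      show m + 2 + 1 - 1 = m + 2 from by omega, Finset.sum_range_succ,
      Finset.sum_range_succ']
    rw [Finset.sum_congr rfl (g := fun i => x (i + 2) ^ 2)
      (fun i _ => by rw [show 1 + (i + 1) = i + 2 from by omega])]
    rw [show 1 + 0 = 1 from rfl, show 1 + (m + 1) = m + 2 from by omega]
    ring
  -- l sum
  have hlsum : ∑ i ∈ Finset.Icc 1 (m + 1), (x (i + 1) - x i) * stdGaussianPDF (z i)
      = ∑ i ∈ Finset.range (m + 1), (x (i + 2) - x (i + 1)) * B (i + 1) := by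
    rw [← Finset.Ico_add_one_right_eq_Icc, Finset.sum_Ico_eq_sum_range,
      show m + 1 + 1 - 1 = m + 1 from by omega]
    refine Finset.sum_congr rfl (fun i _ => ?_)
    rw [show 1 + i = i + 1 from by omega, show i + 1 + 1 = i + 2 from by omega]
  rw [hsq, hlsum]
  -- abel summation
  have habel : x 1 * B 1 + (∑ i ∈ Finset.range m, x (i + 2) * (B (i + 2) - B (i + 1)))
      - x (m + 2) * B (m + 1)
      = -∑ i ∈ Finset.range (m + 1), (x (i + 2) - x (i + 1)) * B (i + 1) := by
    have := abel_sum m (fun i => x (i + 1)) B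
    simpa using this
  have hcast : ((m + 2 : ℕ) : ℝ) = N := by push_cast [hN]; ring
  rw [hcast]
  have hmN : (m : ℝ) * (1 / N) + 2 * (1 / N) = 1 := by
    field_simp [hN]
    linarith [hN]
  simp only [hA] at *
  linear_combination 2 * σ * habel + σ ^ 2 * hmN
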